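/- Let n = 2^m with m ≥ 2, let C0 be an even binary (n, 2^(n-1)/n, 4) code and C1 an odd binary (n, 2^(n-1)/n, 4) code. Then there exists a set C ⊆ X^n with |C| = 2^(n-1)/n, pairwise Hamming distances at least 3 between distinct words, e(C) = C0 and o(C) = C1. -/

import Mathlib

/-- A ternary word has exactly one coordinate equal to 0 (the `*` symbol). -/
def exactlyOneStar {n : ℕ} (x : Fin n → Fin 3) : Prop :=
  (Finset.univ.filter (fun i => x i = 0)).card = 1

/-- The binary word associated to a ternary word `x`, where the value `1` of `x`
represents the binary `0`, the value `2` represents the binary `1`, and the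
coordinates where `x` is `0` (the `*`) get the value `v`. -/
def binPart {n : ℕ} (x : Fin n → Fin 3) (v : Fin 2) : Fin n → Fin 2 :=
  fun i => if x i = 0 then v else if x i = 2 then 1 else 0

/-- The (Hamming) weight of a binary word: the number of 1s. -/
def wt {n : ℕ} (y : Fin n → Fin 2) : ℕ :=
  (Finset.univ.filter (fun i => y i = 1)).card

/-- The even-weight binary word `e(x)` determined by `x ∈ Xⁿ`. -/
def eWord {n : ℕ} (x : Fin n → Fin 3) : Fin n → Fin 2 :=
  if wt (binPart x 0) % 2 = 0 then binPart x 0 else binPart x 1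

/-- The odd-weight binary word `o(x)` determined by `x ∈ Xⁿ`. -/
def oWord {n : ℕ} (x : Fin n → Fin 3) : Fin n → Fin 2 :=
  if wt (binPart x 0) % 2 = 0 then binPart x 1 else binPart x 0

open Finset

lemma star_unique {n : ℕ} {x : Fin n → Fin 3} (hx : exactlyOneStar x) :
    ∃ j, x j = 0 ∧ ∀ l, x l = 0 → l = j := by
  obtain ⟨j, hj⟩ := Finset.card_eq_one.mp hx
  refine ⟨j, ?_, ?_⟩
  · have : j ∈ univ.filter (fun i => x i = 0) := hj ▸ Finset.mem_singleton_self j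
    simpa using this
  · intro l hl
    have : l ∈ univ.filter (fun i => x i = 0) := by simpa using hl
    rw [hj] at this; simpa using this

lemma eWord_apply {n : ℕ} (x : Fin n → Fin 3) (l : Fin n) (hl : x l ≠ 0) :
    eWord x l = if x l = 2 then 1 else 0 := by
  unfold eWord; split <;> simp [binPart, hl]

lemma oWord_apply {n : ℕ} (x : Fin n → Fin 3) (l : Fin n) (hl : x l ≠ 0) :
    oWord x l = if x l = 2 then 1 else 0 := by
  unfold oWord; split <;> simp [binPart, hl]

lemma eo_close {n : ℕ} {x : Fin n → Fin 3} (hx : exactlyOneStar x) :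
    hammingDist (eWord x) (oWord x) ≤ 1 := by
  obtain ⟨j, hj, hju⟩ := star_unique hx
  show (univ.filter fun l => eWord x l ≠ oWord x l).card ≤ 1
  have hsub : (univ.filter fun l => eWord x l ≠ oWord x l) ⊆ {j} := by
    intro l hl
    simp only [mem_filter, mem_univ, true_and] at hl
    simp only [mem_singleton]
    by_contra hlj
    have hx0 : x l ≠ 0 := fun h => hlj (hju l h)
    rw [eWord_apply x l hx0, oWord_apply x l hx0] at hl
    exact hl rfl
  calc _ ≤ ({j} : Finset (Fin n)).card := Finset.card_le_card hsub
  _ = 1 := rfl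

lemma dist_ge_three {n : ℕ} {x y : Fin n → Fin 3} (hx : exactlyOneStar x)
    (hy : exactlyOneStar y) (h4 : 4 ≤ hammingDist (oWord x) (oWord y)) :
    3 ≤ hammingDist x y := by
  obtain ⟨j, hj, hju⟩ := star_unique hx
  obtain ⟨k, hk, hku⟩ := star_unique hy
  have h4' : 4 ≤ (univ.filter fun l => oWord x l ≠ oWord y l).card := h4
  show 3 ≤ (univ.filter fun l => x l ≠ y l).card
  set s := univ.filter fun l : Fin n => x l ≠ y l with hs
  set s' := univ.filter fun l : Fin n => oWord x l ≠ oWord y l with hs'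
  have hsub : s' \ {j, k} ⊆ s := by
    intro l hl
    rw [Finset.mem_sdiff] at hl
    obtain ⟨hl1, hl2⟩ := hl
    simp only [Finset.mem_insert, Finset.mem_singleton] at hl2
    push_neg at hl2
    have hxl : x l ≠ 0 := fun h => hl2.1 (hju l h)
    have hyl : y l ≠ 0 := fun h => hl2.2 (hku l h)
    simp only [hs, hs', mem_filter, mem_univ, true_and] at hl1 ⊢
    intro hxy
    exact hl1 (by rw [oWord_apply x l hxl, oWord_apply y l hyl, hxy])
  have hjk2 : ({j, k} : Finset (Fin n)).card ≤ 2 := Finset.card_insert_le _ _ |>.trans (by simp)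
  have hle := Finset.le_card_sdiff ({j, k} : Finset (Fin n)) s'
  have hsd : 2 ≤ (s' \ {j, k}).card := by omega
  have hcs := Finset.card_le_card hsub
  rcases eq_or_ne j k with rfl | hjk
  · have h1 : ({j, j} : Finset (Fin n)).card = 1 := by simp
    have hle' := Finset.le_card_sdiff ({j, j} : Finset (Fin n)) s'
    omega
  · have hjs : j ∈ s := by
      simp only [hs, mem_filter, mem_univ, true_and]
      intro hxy
      exact hjk (hku j (hxy ▸ hj))
    have hks : k ∈ s := by
      simp only [hs, mem_filter, mem_univ, true_and]
      intro hxy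
      exact hjk (hju k (hxy.symm ▸ hk)).symm  -- x k = y k = 0 → k = j
    have hjns : j ∉ s' \ {j, k} := fun h => by simp at h
    have hkns : k ∉ s' \ {j, k} := fun h => by simp at h
    have hins : insert j (insert k (s' \ {j, k})) ⊆ s := by
      intro l hl
      rcases Finset.mem_insert.mp hl with rfl | hl
      · exact hjs
      rcases Finset.mem_insert.mp hl with rfl | hl
      · exact hks
      · exact hsub hl
    have hc := Finset.card_le_card hins
    rw [Finset.card_insert_of_notMem (by simp only [Finset.mem_insert, not_or]; exact ⟨hjk, hjns⟩),
      Finset.card_insert_of_notMem hkns] at hc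
    omega

lemma construct {n : ℕ} (c0 c1 : Fin n → Fin 2) (i : Fin n)
    (h : c1 = Function.update c0 i (c0 i + 1))
    (h0 : wt c0 % 2 = 0) (h1 : wt c1 % 2 = 1) :
    ∃ x : Fin n → Fin 3, exactlyOneStar x ∧ eWord x = c0 ∧ oWord x = c1 := by
  set x : Fin n → Fin 3 := fun j => if j = i then 0 else if c1 j = 1 then 2 else 1 with hxdef
  have hxi : x i = 0 := by simp [hxdef]
  have hxne : ∀ j, j ≠ i → x j ≠ 0 := by
    intro j hj
    simp only [hxdef, if_neg hj]
    split <;> decide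
  have hstar : exactlyOneStar x := by
    unfold exactlyOneStar
    have : (univ.filter fun j => x j = 0) = {i} := by
      ext j
      simp only [mem_filter, mem_univ, true_and, mem_singleton]
      constructor
      · intro hjx; by_contra hji; exact hxne j hji hjx
      · intro hji; subst hji; exact hxi
    rw [this, Finset.card_singleton]
  have hbin : ∀ v, binPart x v = Function.update c1 i v := by
    intro v
    funext j
    rcases eq_or_ne j i with rfl | hj
    · simp [binPart, hxi, Function.update_self]
    · rw [Function.update_apply, if_neg hj]
      simp only [binPart, if_neg (hxne j hj)]
      have hxj : x j = if c1 j = 1 then 2 else 1 := by simp [hxdef, hj]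
      rcases (show ∀ a : Fin 2, a = 0 ∨ a = 1 by decide) (c1 j) with hc | hc <;>
        rw [hc] at hxj ⊢ <;> simp [hxj]
  have hc1i : c1 i = c0 i + 1 := by rw [h, Function.update_self]
  have hc0 : c0 = Function.update c1 i (c1 i + 1) := by
    funext j
    rcases eq_or_ne j i with rfl | hj
    · rw [Function.update_self, hc1i,
        (show ∀ a : Fin 2, a + 1 + 1 = a by decide) (c0 j)]
    · rw [Function.update_apply, if_neg hj, h, Function.update_apply, if_neg hj]
  have hself : Function.update c1 i (c1 i) = c1 := Function.update_eq_self i c1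
  refine ⟨x, hstar, ?_, ?_⟩ <;>
  · rcases (show ∀ a : Fin 2, a = 0 ∨ a = 1 by decide) (c1 i) with hc | hc
    · have hb0 : binPart x 0 = c1 := by rw [hbin 0, ← hc, hself]
      have hb1 : binPart x 1 = c0 := by
        rw [hbin 1, hc0, hc]; rfl
      first
      | (show eWord x = c0; unfold eWord; rw [hb0, h1]; simp [hb1])
      | (show oWord x = c1; unfold oWord; rw [hb0, h1]; simp)
    · have hb0 : binPart x 0 = c0 := by
        rw [hbin 0, hc0, hc]; rfl
      have hb1 : binPart x 1 = c1 := by rw [hbin 1, ← hc, hself]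
      first
      | (show eWord x = c0; unfold eWord; rw [hb0, h0]; simp)
      | (show oWord x = c1; unfold oWord; rw [hb0, h0]; simp [hb1])

lemma wt_eq_sum {n : ℕ} (y : Fin n → Fin 2) : wt y = ∑ i, (y i).val := by
  unfold wt
  rw [Finset.card_filter]
  exact Finset.sum_congr rfl fun i _ =>
    (show ∀ a : Fin 2, (if a = 1 then 1 else 0) = a.val by decide) (y i)

lemma wt_flip {n : ℕ} (c : Fin n → Fin 2) (i : Fin n) :
    wt (Function.update c i (c i + 1)) % 2 = (wt c + 1) % 2 := by
  rw [wt_eq_sum, wt_eq_sum,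
    Finset.sum_eq_sum_sdiff_singleton_add (Finset.mem_univ i)
      (fun j => (Function.update c i (c i + 1) j).val),
    Finset.sum_eq_sum_sdiff_singleton_add (Finset.mem_univ i) (fun j => (c j).val)]
  have h1 : ∑ x ∈ univ \ {i}, (Function.update c i (c i + 1) x).val
      = ∑ x ∈ univ \ {i}, (c x).val := by
    refine Finset.sum_congr rfl fun j hj => ?_
    rw [Function.update_apply, if_neg (by simpa using (Finset.mem_sdiff.mp hj).2)]
  rw [h1, Function.update_self]
  have h2 : ((c i) + 1).val + (c i).val = 1 :=
    (show ∀ a : Fin 2, (a + 1).val + a.val = 1 by decide) (c i)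
  omega

lemma hd_flip {n : ℕ} (c : Fin n → Fin 2) (i : Fin n) :
    hammingDist c (Function.update c i (c i + 1)) = 1 := by
  show (univ.filter fun j => c j ≠ Function.update c i (c i + 1) j).card = 1
  have : (univ.filter fun j => c j ≠ Function.update c i (c i + 1) j) = {i} := by
    ext j
    simp only [mem_filter, mem_univ, true_and, mem_singleton, Function.update_apply]
    constructor
    · intro h; by_contra hj; exact h (by rw [if_neg hj])
    · intro h; subst h; rw [if_pos rfl]
      exact (show ∀ a : Fin 2, a ≠ a + 1 by decide) (c j)
  rw [this, Finset.card_singleton]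

lemma card_odd {n : ℕ} (hn : 0 < n) :
    (univ.filter fun y : Fin n → Fin 2 => wt y % 2 = 1).card = 2 ^ (n - 1) := by
  set i : Fin n := ⟨0, hn⟩
  have hcard : (univ.filter fun y : Fin n → Fin 2 => wt y % 2 = 1).card
      = (univ.filter fun y : Fin n → Fin 2 => ¬ (wt y % 2 = 1)).card := by
    apply Finset.card_bij' (fun y _ => Function.update y i (y i + 1))
      (fun y _ => Function.update y i (y i + 1))
    · intro y _
      funext j
      rcases eq_or_ne j i with rfl | hj
      · simp [Function.update_self, (show ∀ a : Fin 2, a + 1 + 1 = a by decide)]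
      · simp [Function.update_apply, hj]
    · intro y _
      funext j
      rcases eq_or_ne j i with rfl | hj
      · simp [Function.update_self, (show ∀ a : Fin 2, a + 1 + 1 = a by decide)]
      · simp [Function.update_apply, hj]
    · intro y hy
      simp only [mem_filter, mem_univ, true_and] at hy ⊢
      rw [wt_flip]; omega
    · intro y hy
      simp only [mem_filter, mem_univ, true_and] at hy ⊢
      rw [wt_flip]; omega
  have htot := Finset.card_filter_add_card_filter_not
    (s := (univ : Finset (Fin n → Fin 2))) (fun y => wt y % 2 = 1)
  have huniv : (univ : Finset (Fin n → Fin 2)).card = 2 ^ n := by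
    simp [Finset.card_univ]
  have hpow : 2 ^ n = 2 * 2 ^ (n - 1) := by
    have h : n - 1 + 1 = n := by omega
    calc 2 ^ n = 2 ^ (n - 1 + 1) := by rw [h]
    _ = 2 * 2 ^ (n - 1) := by rw [pow_succ]; exact Nat.mul_comm _ _
  omega


/-- For any even binary `(n = 2^m, 2^(n-1)/n, 4)` code `C0` and any odd binary
`(n, 2^(n-1)/n, 4)` code `C1` there is an `(n, 3, n-1; 2^(n-1)/n)₃` ternary
constant weight code `C` with `e(C) = C0` and `o(C) = C1`. -/
theorem combine_even_odd_codes (m n : ℕ) (hm : 2 ≤ m) (hn : n = 2 ^ m)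
    (C0 C1 : Finset (Fin n → Fin 2))
    (hC0card : C0.card = 2 ^ (n - 1) / n)
    (hC0dist : ∀ x ∈ C0, ∀ y ∈ C0, x ≠ y → 4 ≤ hammingDist x y)
    (hC0even : ∀ x ∈ C0, wt x % 2 = 0)
    (hC1card : C1.card = 2 ^ (n - 1) / n)
    (hC1dist : ∀ x ∈ C1, ∀ y ∈ C1, x ≠ y → 4 ≤ hammingDist x y)
    (hC1odd : ∀ x ∈ C1, wt x % 2 = 1) :
    ∃ C : Finset (Fin n → Fin 3),
      (∀ x ∈ C, exactlyOneStar x) ∧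
      C.card = 2 ^ (n - 1) / n ∧
      (∀ x ∈ C, ∀ y ∈ C, x ≠ y → 3 ≤ hammingDist x y) ∧
      C.image eWord = C0 ∧ C.image oWord = C1 := by
  classical
  have hlt : m < 2 ^ m := Nat.lt_two_pow_self
  have npos : 0 < n := by omega
  have hmn : m ≤ n - 1 := by omega
  have hK : 2 ^ (n - 1) / n = 2 ^ (n - 1 - m) := by
    have h := Nat.pow_div (x := 2) hmn (by norm_num)
    rwa [← hn] at h
  have hmul : 2 ^ (n - 1 - m) * n = 2 ^ (n - 1) := by
    rw [hn, ← pow_add]; congr 1; omega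
  -- The flipping map
  set F : (Fin n → Fin 2) × Fin n → (Fin n → Fin 2) :=
    fun p => Function.update p.1 p.2 (p.1 p.2 + 1) with hF
  set O : Finset (Fin n → Fin 2) := univ.filter (fun y => wt y % 2 = 1) with hO
  have hImSub : (C0 ×ˢ univ).image F ⊆ O := by
    intro y hy
    obtain ⟨p, hp, rfl⟩ := Finset.mem_image.mp hy
    obtain ⟨hp1, _⟩ := Finset.mem_product.mp hp
    simp only [hO, mem_filter, mem_univ, true_and, hF]
    have := wt_flip p.1 p.2
    have := hC0even p.1 hp1
    omega
  have hInj : Set.InjOn F ((C0 ×ˢ (univ : Finset (Fin n))) : Finset ((Fin n → Fin 2) × Fin n)) := by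
    intro p hp q hq hpq
    simp only [Finset.coe_product, Set.mem_prod, Finset.mem_coe] at hp hq
    have hd1 : hammingDist p.1 (F p) = 1 := hd_flip p.1 p.2
    have hd2 : hammingDist q.1 (F q) = 1 := hd_flip q.1 q.2
    have htri : hammingDist p.1 q.1 ≤ 2 := by
      calc hammingDist p.1 q.1 ≤ hammingDist p.1 (F p) + hammingDist (F p) q.1 :=
            hammingDist_triangle _ _ _
      _ = 1 + hammingDist q.1 (F q) := by rw [hd1, hpq, hammingDist_comm]
      _ = 2 := by rw [hd2]
    have h1 : p.1 = q.1 := by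
      by_contra hne
      have := hC0dist p.1 hp.1 q.1 hq.1 hne
      omega
    have h2 : p.2 = q.2 := by
      by_contra hne
      have := congrFun hpq p.2
      simp only [hF, h1] at this
      rw [Function.update_self, Function.update_apply, if_neg hne] at this
      exact (show ∀ a : Fin 2, a + 1 ≠ a by decide) (q.1 p.2) this
    exact Prod.ext h1 h2
  have hcardIm : ((C0 ×ˢ univ).image F).card = 2 ^ (n - 1) := by
    rw [Finset.card_image_of_injOn hInj, Finset.card_product, Finset.card_univ,
      Fintype.card_fin, hC0card, hK, hmul]
  have hOcard : O.card = 2 ^ (n - 1) := card_odd npos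
  have hImEq : (C0 ×ˢ univ).image F = O :=
    Finset.eq_of_subset_of_card_le hImSub (by omega)
  -- the key existence statement
  have key : ∀ c1 ∈ C1, ∃ x : Fin n → Fin 3,
      exactlyOneStar x ∧ eWord x ∈ C0 ∧ oWord x = c1 := by
    intro c1 hc1
    have hc1O : c1 ∈ O := by
      simp only [hO, mem_filter, mem_univ, true_and]; exact hC1odd c1 hc1
    rw [← hImEq] at hc1O
    obtain ⟨p, hp, hfp⟩ := Finset.mem_image.mp hc1O
    obtain ⟨hp1, _⟩ := Finset.mem_product.mp hp
    obtain ⟨x, hx1, hx2, hx3⟩ := construct p.1 c1 p.2 (by rw [← hfp])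
      (hC0even p.1 hp1) (hC1odd c1 hc1)
    exact ⟨x, hx1, hx2 ▸ hp1, hx3⟩
  choose f hf1 hf2 hf3 using key
  set D : Finset (Fin n → Fin 3) := C1.attach.image (fun c => f c.1 c.2) with hD
  refine ⟨D, ?_, ?_, ?_, ?_, ?_⟩
  · intro x hx
    obtain ⟨a, _, rfl⟩ := Finset.mem_image.mp hx
    exact hf1 a.1 a.2
  · rw [Finset.card_image_of_injOn, Finset.card_attach, hC1card]
    intro a _ b _ hab
    have h2 : oWord (f a.1 a.2) = oWord (f b.1 b.2) := congrArg oWord hab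
    rw [hf3 a.1 a.2, hf3 b.1 b.2] at h2
    exact Subtype.ext h2
  · intro x hx y hy hxy
    obtain ⟨a, _, rfl⟩ := Finset.mem_image.mp hx
    obtain ⟨b, _, rfl⟩ := Finset.mem_image.mp hy
    have hab : a.1 ≠ b.1 := by
      intro h
      exact hxy (by cases a; cases b; cases Subtype.ext h; rfl)
    have h4 : 4 ≤ hammingDist (oWord (f a.1 a.2)) (oWord (f b.1 b.2)) := by
      rw [hf3 a.1 a.2, hf3 b.1 b.2]
      exact hC1dist a.1 a.2 b.1 b.2 hab
    exact dist_ge_three (hf1 a.1 a.2) (hf1 b.1 b.2) h4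
  · -- image eWord = C0
    have hsub : D.image eWord ⊆ C0 := by
      intro z hz
      obtain ⟨x, hx, rfl⟩ := Finset.mem_image.mp hz
      obtain ⟨a, _, rfl⟩ := Finset.mem_image.mp hx
      exact hf2 a.1 a.2
    apply Finset.eq_of_subset_of_card_le hsub
    have hinjE : Set.InjOn eWord (↑D : Set (Fin n → Fin 3)) := by
      intro x hx y hy hexy
      rw [Finset.mem_coe, hD] at hx hy
      obtain ⟨a, ha, rfl⟩ := Finset.mem_image.mp hx
      obtain ⟨b, hb, rfl⟩ := Finset.mem_image.mp hy
      have hea := eo_close (hf1 a.1 a.2)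
      have heb := eo_close (hf1 b.1 b.2)
      have hea' : hammingDist (oWord (f a.1 a.2)) (eWord (f a.1 a.2)) ≤ 1 := by
        rw [hammingDist_comm]; exact hea
      have htri : hammingDist (oWord (f a.1 a.2)) (oWord (f b.1 b.2)) ≤ 2 := by
        have t := hammingDist_triangle (oWord (f a.1 a.2)) (eWord (f a.1 a.2))
          (oWord (f b.1 b.2))
        nth_rewrite 2 [hexy] at t
        omega
      have hab : a.1 = b.1 := by
        by_contra hne
        have := hC1dist a.1 a.2 b.1 b.2 hne
        rw [hf3 a.1 a.2, hf3 b.1 b.2] at htri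
        omega
      cases a; cases b; cases Subtype.ext hab; rfl
    rw [Finset.card_image_of_injOn hinjE, hC0card, hD]
    rw [Finset.card_image_of_injOn, Finset.card_attach, hC1card]
    intro a _ b _ hab
    have h2 : oWord (f a.1 a.2) = oWord (f b.1 b.2) := congrArg oWord hab
    rw [hf3 a.1 a.2, hf3 b.1 b.2] at h2
    exact Subtype.ext h2
  · -- image oWord = C1
    apply Finset.Subset.antisymm
    · intro z hz
      obtain ⟨x, hx, rfl⟩ := Finset.mem_image.mp hz
      obtain ⟨a, _, rfl⟩ := Finset.mem_image.mp hx
      rw [hf3 a.1 a.2]; exact a.2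
    · intro c1 hc1
      refine Finset.mem_image.mpr ⟨f c1 hc1, ?_, hf3 c1 hc1⟩
      exact Finset.mem_image.mpr ⟨⟨c1, hc1⟩, Finset.mem_attach _ _, rfl⟩
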